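/- Every gadget splitting function whose gadget is a single asymmetric EDVWs-based gadget, i.e., w(S) = min{a·γ(S), b·γ(e \ S)} with a, b > 0 and positive vertex weights γ, is submodular. -/

import Mathlib

lemma key16 (a b c x1 x2 T : ℝ) (ha : 0 ≤ a) (hb : 0 ≤ b) (hc : 0 ≤ c)
    (h12 : x1 ≤ x2) :
    min (a * (x2 + c)) (b * (T - (x2 + c))) - min (a * x2) (b * (T - x2)) ≤
      min (a * (x1 + c)) (b * (T - (x1 + c))) - min (a * x1) (b * (T - x1)) := by
  simp only [min_def]
  split_ifs <;>
    nlinarith [mul_nonneg ha hc, mul_nonneg hb hc,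
      mul_le_mul_of_nonneg_left h12 ha, mul_le_mul_of_nonneg_left h12 hb]

theorem stmt16 {V : Type*} [DecidableEq V] (e : Finset V) (γ : V → ℝ)
    (hγ : ∀ v ∈ e, 0 < γ v) (a b : ℝ) (ha : 0 < a) (hb : 0 < b) :
    ∀ (S1 S2 : Finset V) (v : V), S1 ⊆ S2 → S2 ⊂ e → v ∈ e → v ∉ S2 →
      min (a * ∑ u ∈ insert v S2, γ u) (b * ∑ u ∈ e \ insert v S2, γ u) -
          min (a * ∑ u ∈ S2, γ u) (b * ∑ u ∈ e \ S2, γ u) ≤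
        min (a * ∑ u ∈ insert v S1, γ u) (b * ∑ u ∈ e \ insert v S1, γ u) -
          min (a * ∑ u ∈ S1, γ u) (b * ∑ u ∈ e \ S1, γ u) := by
  intro S1 S2 v h12 h2e hve hvS2
  have hS2e : S2 ⊆ e := h2e.subset
  have hS1e : S1 ⊆ e := h12.trans hS2e
  have hvS1 : v ∉ S1 := fun h => hvS2 (h12 h)
  have hi2 : insert v S2 ⊆ e := Finset.insert_subset hve hS2e
  have hi1 : insert v S1 ⊆ e := Finset.insert_subset hve hS1e
  have sd : ∀ S : Finset V, S ⊆ e → ∑ u ∈ e \ S, γ u = (∑ u ∈ e, γ u) - ∑ u ∈ S, γ u := by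
    intro S hS
    have := Finset.sum_sdiff (f := γ) hS
    linarith
  rw [sd _ hS2e, sd _ hS1e, sd _ hi2, sd _ hi1,
    Finset.sum_insert hvS2, Finset.sum_insert hvS1]
  have hx : ∑ u ∈ S1, γ u ≤ ∑ u ∈ S2, γ u :=
    Finset.sum_le_sum_of_subset_of_nonneg h12 (fun i hi _ => (hγ i (hS2e hi)).le)
  have h := key16 a b (γ v) (∑ u ∈ S1, γ u) (∑ u ∈ S2, γ u) (∑ u ∈ e, γ u)
    ha.le hb.le (hγ v hve).le hx
  convert h using 3 <;> ring_nf
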